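/- Let S = {φ₁,…,φ_s} ⊆ P be an almost strongly tight set of finite cardinality s > 1. Then S is strongly tight if and only if Σ_S = 0. -/

import Mathlib

/-- Proposition 7.1: Let `V` be a vector space over `𝔽₂`, `U ⊆ V` a
subspace, and `P ⊆ V` a spanning set with `0 ∈ P`, such that every coset of `U` contains
at most one element of `P`.  A finite set `S ⊆ V` is *tight* if `⟨S⟩ ⊆ P + U`, and
*strongly tight* if `⟨S⟩ ⊆ P`; for each `T ⊆ S`, `p_T` denotes the unique element of `P`
in the coset `(∑_{v ∈ T} v) + U`, and `Σ_S = ∑_{T ⊆ S} p_T`.  If `S = {φ₁,…,φ_s}` is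
almost strongly tight (tight, with every proper subset strongly tight) of cardinality
`s > 1`, then `S` is strongly tight if and only if `Σ_S = 0`. -/
theorem almostStronglyTight_stronglyTight_iff_sigma_zero
    {V : Type*} [AddCommGroup V] [Module (ZMod 2) V]
    (U : Submodule (ZMod 2) V) (P : Set V)
    (hP0 : (0 : V) ∈ P) (hPspan : Submodule.span (ZMod 2) P = ⊤)
    (hPunique : ∀ p ∈ P, ∀ q ∈ P, p - q ∈ U → p = q)
    (S : Finset V) (hScard : 1 < S.card) (hSP : (S : Set V) ⊆ P)
    (htight : ∀ v ∈ Submodule.span (ZMod 2) (S : Set V), ∃ p ∈ P, v - p ∈ U)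
    (hAST : ∀ S' : Finset V, S' ⊂ S →
      ∀ v ∈ Submodule.span (ZMod 2) (S' : Set V), v ∈ P)
    (rep : Finset V → V)
    (hrep : ∀ S' ⊆ S, rep S' ∈ P ∧ (∑ v ∈ S', v) - rep S' ∈ U) :
    (∀ v ∈ Submodule.span (ZMod 2) (S : Set V), v ∈ P) ↔
      ∑ S' ∈ S.powerset, rep S' = 0 := by
  classical
  -- the module is 2-torsion
  have htwo : ∀ x : V, x + x = 0 := by
    intro x
    have h := two_smul (ZMod 2) x
    rw [show (2 : ZMod 2) = 0 by decide, zero_smul] at h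
    exact h.symm
  have hneg : ∀ x : V, -x = x := fun x => neg_eq_of_add_eq_zero_left (htwo x)
  -- subset sums lie in the span
  have hsum_mem : ∀ T : Finset V, (∑ v ∈ T, v) ∈ Submodule.span (ZMod 2) (T : Set V) :=
    fun T => Submodule.sum_mem _ fun v hv => Submodule.subset_span hv
  -- for proper subsets, rep T is the subset sum itself
  have hrepA : ∀ T ⊆ S, T ≠ S → rep T = ∑ v ∈ T, v := by
    intro T hT hne
    have hss : T ⊂ S := hT.ssubset_of_ne hne
    have h1 : (∑ v ∈ T, v) ∈ P := hAST T hss _ (hsum_mem T)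
    have h2 := hrep T hT
    exact (hPunique _ h1 _ h2.1 h2.2).symm
  -- sum of all subset sums over the powerset vanishes
  obtain ⟨a, ha⟩ := Finset.card_pos.mp (by omega : 0 < S.card)
  have hins : S = insert a (S.erase a) := (Finset.insert_erase ha).symm
  have hans : a ∉ S.erase a := Finset.notMem_erase a S
  have hcard : 1 ≤ (S.erase a).card := by
    have := Finset.card_erase_of_mem ha; omega
  have hzero : ∑ T ∈ S.powerset, ∑ v ∈ T, v = 0 := by
    rw [hins, Finset.sum_powerset_insert hans]
    have hcongr : ∑ t ∈ (S.erase a).powerset, ∑ v ∈ insert a t, v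
        = ∑ t ∈ (S.erase a).powerset, (a + ∑ v ∈ t, v) := by
      refine Finset.sum_congr rfl fun t ht => ?_
      exact Finset.sum_insert fun h => hans (Finset.mem_powerset.mp ht h)
    rw [hcongr, Finset.sum_add_distrib, Finset.sum_const, Finset.card_powerset]
    have hpow : (2 ^ (S.erase a).card) • a = 0 := by
      obtain ⟨m, hm⟩ : ∃ m, (S.erase a).card = m + 1 := ⟨(S.erase a).card - 1, by omega⟩
      rw [hm, pow_succ, mul_smul, two_smul, htwo, smul_zero]
    rw [hpow, zero_add]
    exact htwo _
  -- decompose the big sum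
  have hmem : S ∈ S.powerset := Finset.mem_powerset_self S
  have herase : ∑ T ∈ S.powerset.erase S, rep T = ∑ v ∈ S, v := by
    have h1 : ∑ T ∈ S.powerset.erase S, rep T
        = ∑ T ∈ S.powerset.erase S, ∑ v ∈ T, v := by
      refine Finset.sum_congr rfl fun T hT => ?_
      have hTS := Finset.mem_powerset.mp (Finset.mem_of_mem_erase hT)
      exact hrepA T hTS (Finset.ne_of_mem_erase hT)
    have h2 : (∑ v ∈ S, v) + ∑ T ∈ S.powerset.erase S, ∑ v ∈ T, v = 0 := by
      rw [Finset.add_sum_erase _ (fun T => ∑ v ∈ T, v) hmem]; exact hzero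
    have h3 := neg_eq_of_add_eq_zero_right h2
    rw [h1, ← h3, hneg]
  have hSigma : ∑ S' ∈ S.powerset, rep S' = rep S + ∑ v ∈ S, v := by
    rw [← Finset.add_sum_erase _ _ hmem, herase]
  -- span elements are subset sums
  have hspan_rep : ∀ v ∈ Submodule.span (ZMod 2) (S : Set V),
      ∃ T ⊆ S, v = ∑ x ∈ T, x := by
    intro v hv
    obtain ⟨f, -, hf⟩ := Submodule.mem_span_finset.mp hv
    refine ⟨S.filter (fun i => f i = 1), Finset.filter_subset _ _, ?_⟩
    have hcase : ∀ c : ZMod 2, c = 0 ∨ c = 1 := by decide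
    rw [← hf, ← Finset.sum_filter_add_sum_filter_not S (fun i => f i = 1)]
    have hA : ∑ i ∈ S.filter (fun i => f i = 1), f i • i
        = ∑ i ∈ S.filter (fun i => f i = 1), i := by
      refine Finset.sum_congr rfl fun i hi => ?_
      rw [(Finset.mem_filter.mp hi).2, one_smul]
    have hB : ∑ i ∈ S.filter (fun i => ¬ f i = 1), f i • i = 0 := by
      refine Finset.sum_eq_zero fun i hi => ?_
      have := (Finset.mem_filter.mp hi).2
      rcases hcase (f i) with h | h
      · rw [h, zero_smul]
      · exact absurd h this
    rw [hA, hB, add_zero]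
  have hσmem : (∑ v ∈ S, v) ∈ Submodule.span (ZMod 2) (S : Set V) := hsum_mem S
  constructor
  · -- strongly tight → Σ = 0
    intro hST
    have hσP : (∑ v ∈ S, v) ∈ P := hST _ hσmem
    have h2 := hrep S (subset_refl S)
    have : (∑ v ∈ S, v) = rep S := hPunique _ hσP _ h2.1 h2.2
    rw [hSigma, ← this]
    exact htwo _
  · -- Σ = 0 → strongly tight
    intro h0 v hv
    rw [hSigma] at h0
    have hrepS : rep S = ∑ v ∈ S, v := by
      have := neg_eq_of_add_eq_zero_right h0
      rw [hneg] at this; exact this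
    obtain ⟨T, hTS, rfl⟩ := hspan_rep v hv
    by_cases hTeq : T = S
    · subst hTeq
      rw [← hrepS]
      exact (hrep T (subset_refl T)).1
    · exact hAST T (hTS.ssubset_of_ne hTeq) _ (hsum_mem T)
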